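/- Consider the vector field on ℝ³ (case n = 2 of the paper's family): F(x₁,x₂,x₃) = (−x₂, x₁, −x₃R(x₃)) + R(x₃)·(λx₁ + a₂f(a₁x₁+a₂x₂), λx₂ − a₁f(a₁x₁+a₂x₂), 0), where R(x) = Σ d_{2l}x^{2l} with d_{2l} > 0, λ < 0, a₁,a₂ ∈ ℝ, f odd polynomial with negative coefficients. Then the plane {x₃ = 0} is invariant for the flow of F, and on this plane F restricts to the linear rotation (x₁,x₂) ↦ (−x₂, x₁); in particular the origin is not locally asymptotically stable for ẋ = F(x). -/

import Mathlib

/-- for the three-dimensional vector field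
`F(x₁,x₂,x₃) = (−x₂,x₁,−x₃R(x₃)) + R(x₃)(λx₁+a₂f(a₁x₁+a₂x₂), λx₂−a₁f(a₁x₁+a₂x₂), 0)`,
the plane `{x₃ = 0}` is invariant and `F` restricts there to the rotation
`(x₁,x₂) ↦ (−x₂,x₁)`; in particular the origin is not locally asymptotically stable
(there is no `δ > 0` such that every solution starting `δ`-close to `0` converges to `0`). -/
theorem stmt19 (s k : ℕ) (hk : 1 ≤ k) (A dcoef : ℕ → ℝ)
    (hA : ∀ i ≤ s, A (2*i+1) < 0) (hd : ∀ l, 1 ≤ l → l ≤ k → 0 < dcoef (2*l))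
    (lam a₁ a₂ : ℝ) (hlam : lam < 0) (f R : ℝ → ℝ)
    (hf : ∀ t : ℝ, f t = ∑ i ∈ Finset.range (s+1), A (2*i+1) * t^(2*i+1))
    (hR : ∀ x : ℝ, R x = ∑ l ∈ Finset.Icc 1 k, dcoef (2*l) * x^(2*l))
    (F : ℝ × ℝ × ℝ → ℝ × ℝ × ℝ)
    (hF : ∀ p : ℝ × ℝ × ℝ, F p =
      (-p.2.1 + R p.2.2 * (lam * p.1 + a₂ * f (a₁*p.1 + a₂*p.2.1)),
       p.1 + R p.2.2 * (lam * p.2.1 - a₁ * f (a₁*p.1 + a₂*p.2.1)),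
       -p.2.2 * R p.2.2)) :
    (∀ x₁ x₂ : ℝ, F (x₁, x₂, 0) = (-x₂, x₁, 0)) ∧
    ¬ ∃ δ : ℝ, 0 < δ ∧ ∀ x : ℝ → ℝ × ℝ × ℝ,
        (∀ t : ℝ, HasDerivAt x (F (x t)) t) → ‖x 0‖ < δ →
        Filter.Tendsto x Filter.atTop (nhds 0) := by
  have hR0 : R 0 = 0 := by
    rw [hR]
    apply Finset.sum_eq_zero
    intro l hl
    simp at hl
    have : (2*l) ≠ 0 := by omega
    simp [zero_pow this]
  have hplane : ∀ x₁ x₂ : ℝ, F (x₁, x₂, 0) = (-x₂, x₁, 0) := by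
    intro x₁ x₂
    rw [hF]
    simp [hR0]
  refine ⟨hplane, ?_⟩
  rintro ⟨δ, hδ, hsol⟩
  set c := δ/2 with hc
  have hcpos : 0 < c := by positivity
  set x : ℝ → ℝ × ℝ × ℝ := fun t => (c * Real.cos t, c * Real.sin t, 0) with hx
  have hderiv : ∀ t : ℝ, HasDerivAt x (F (x t)) t := by
    intro t
    have h1 : HasDerivAt (fun t => c * Real.cos t) (c * (-Real.sin t)) t :=
      (Real.hasDerivAt_cos t).const_mul c
    have h2 : HasDerivAt (fun t => c * Real.sin t) (c * Real.cos t) t :=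
      (Real.hasDerivAt_sin t).const_mul c
    have h3 : HasDerivAt (fun _ : ℝ => (0:ℝ)) 0 t := hasDerivAt_const t 0
    have := h1.prodMk (h2.prodMk h3)
    convert this using 1
    rw [hx]
    rw [hplane]
    simp
  have hnorm : ‖x 0‖ < δ := by
    have : x 0 = (c, 0, 0) := by simp [hx]
    rw [this]
    have : ‖((c:ℝ), (0:ℝ), (0:ℝ))‖ = c := by
      rw [Prod.norm_def, Prod.norm_def]
      simp [Real.norm_eq_abs, abs_of_pos hcpos, le_of_lt hcpos]
    rw [this]
    linarith
  have htend := hsol x hderiv hnorm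
  -- evaluate along t = 2πn
  have hseq : Filter.Tendsto (fun n : ℕ => (2 * Real.pi * n : ℝ)) Filter.atTop Filter.atTop := by
    apply Filter.Tendsto.const_mul_atTop (by positivity : (0:ℝ) < 2 * Real.pi)
    exact tendsto_natCast_atTop_atTop
  have h1 : Filter.Tendsto (fun n : ℕ => x (2 * Real.pi * n)) Filter.atTop (nhds 0) :=
    htend.comp hseq
  have h2 : ∀ n : ℕ, x (2 * Real.pi * n) = (c, 0, 0) := by
    intro n
    have e : (2 * Real.pi * n : ℝ) = (2 * n : ℕ) * Real.pi := by push_cast; ring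
    have hsin : Real.sin (2 * Real.pi * n) = 0 := by rw [e]; exact Real.sin_nat_mul_pi _
    have hcos : Real.cos (2 * Real.pi * n) = 1 := by
      rw [show (2 * Real.pi * n : ℝ) = n * (2 * Real.pi) by ring]
      exact Real.cos_nat_mul_two_pi n
    simp [hx, hsin, hcos]
  rw [show (fun n : ℕ => x (2 * Real.pi * n)) = fun _ => ((c:ℝ), (0:ℝ), (0:ℝ)) from funext h2] at h1
  have := tendsto_nhds_unique h1 tendsto_const_nhds
  have : c = 0 := by
    have h := congrArg Prod.fst this
    simpa using h.symm
  linarith
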